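/- Let I be a set and L ⊆ ℤ^(I) a lattice. Then: (a) the Graver basis of L is a Gröbner basis of L with respect to every term order on ℤ_{≥0}^(I) (hence a universal Gröbner basis); (b) if B ⊆ L is a Gröbner basis of L with respect to some term order, then B is a Markov basis of L; (c) every Markov basis of L is a generating set of L (L equals the subgroup generated by B). -/

import Mathlib

open Finsupp

/-- A permutation of `ℕ` that moves only finitely many points:
an element of the infinite symmetric group `Sym`. -/
def IsFinPerm (σ : Equiv.Perm ℕ) : Prop := {i | σ i ≠ i}.Finite

/-- Membership in `Sym(n)`: permutations of `ℕ` fixing every index `≥ n`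
(the indices `0, 1, …, n-1` play the role of `[n] = {1, …, n}`). -/
def InSymN (n : ℕ) (σ : Equiv.Perm ℕ) : Prop := ∀ i, n ≤ i → σ i = i

/-- `u ∈ ℤ_{≥0}^{(I)}`. -/
def FsNonneg {I : Type*} (u : I →₀ ℤ) : Prop := ∀ i, 0 ≤ u i

/-- The partial order `⊑`. -/
def Sqle {I : Type*} (u v : I →₀ ℤ) : Prop := ∀ i, 0 ≤ u i * v i ∧ |u i| ≤ |v i|

/-- The Graver basis of (the underlying set of) a lattice `L`:
the `⊑`-minimal elements of `L \ {0}`. -/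
def GraverBasis {I : Type*} (L : Set (I →₀ ℤ)) : Set (I →₀ ℤ) :=
  {u | u ∈ L ∧ u ≠ 0 ∧ ∀ v ∈ L, v ≠ 0 → Sqle v u → v = u}

/-- The `L`-fiber of `u`. -/
def latFiber {I : Type*} (L : Set (I →₀ ℤ)) (u : I →₀ ℤ) : Set (I →₀ ℤ) :=
  {v | FsNonneg v ∧ u - v ∈ L}

/-- `B` is a Markov basis of `L`: for each nonnegative `u` the graph on the fiber
`F_L(u)` with edges `v ~ w` whenever `v - w ∈ B ∪ (-B)` is connected. -/
def IsMarkovBasis {I : Type*} (L B : Set (I →₀ ℤ)) : Prop :=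
  ∀ u, FsNonneg u → ∀ v ∈ latFiber L u, ∀ w ∈ latFiber L u,
    Relation.ReflTransGen
      (fun x y => x ∈ latFiber L u ∧ y ∈ latFiber L u ∧ (x - y ∈ B ∨ y - x ∈ B)) v w

/-- A term order on `ℤ_{≥0}^{(I)}`: an additive well-order on the nonnegative elements. -/
structure TermOrderZ (I : Type*) where
  lt : (I →₀ ℤ) → (I →₀ ℤ) → Prop
  irrefl : ∀ u, FsNonneg u → ¬ lt u u
  trans : ∀ u v w, FsNonneg u → FsNonneg v → FsNonneg w → lt u v → lt v w → lt u w
  total : ∀ u v, FsNonneg u → FsNonneg v → u ≠ v → lt u v ∨ lt v u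
  min_exists : ∀ S : Set (I →₀ ℤ), (∀ u ∈ S, FsNonneg u) → S.Nonempty →
    ∃ m ∈ S, ∀ u ∈ S, u ≠ m → ¬ lt u m
  add_right : ∀ u v w, FsNonneg u → FsNonneg v → FsNonneg w → lt u v → lt (u + w) (v + w)

/-- There is a directed path (w.r.t. `lt`, with moves from `B ∪ (-B)`) inside the fiber
of `u` from `u` to the `lt`-minimal element of the fiber. -/
def GroebnerPath {I : Type*} (L : Set (I →₀ ℤ)) (lt : (I →₀ ℤ) → (I →₀ ℤ) → Prop)
    (B : Set (I →₀ ℤ)) (u : I →₀ ℤ) : Prop :=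
  ∃ (s : ℕ) (v : ℕ → (I →₀ ℤ)), v 0 = u ∧ (∀ t ≤ s, v t ∈ latFiber L u) ∧
    (∀ t < s, lt (v (t + 1)) (v t) ∧ (v t - v (t + 1) ∈ B ∨ v (t + 1) - v t ∈ B)) ∧
    (∀ w ∈ latFiber L u, w ≠ v s → lt (v s) w)

/-- `B` is a Gröbner basis of `L` with respect to the term order `lt`. -/
def IsGroebnerBasis {I : Type*} (L : Set (I →₀ ℤ))
    (lt : (I →₀ ℤ) → (I →₀ ℤ) → Prop) (B : Set (I →₀ ℤ)) : Prop :=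
  ∀ u, FsNonneg u → GroebnerPath L lt B u

/-- `H` is a Hilbert basis of the (set underlying a) monoid `M`:
a generating set of `M` contained in every generating set of `M`. -/
def IsHilbertBasis {N : Type*} [AddCommMonoid N] (M H : Set N) : Prop :=
  H ⊆ M ∧ (AddSubmonoid.closure H : Set N) = M ∧
    ∀ A ⊆ M, (AddSubmonoid.closure A : Set N) = M → H ⊆ A

/-- `u` is an irreducible element of `M`. -/
def IsIrredElem {N : Type*} [AddCommMonoid N] (M : Set N) (u : N) : Prop :=
  u ∈ M ∧ u ≠ 0 ∧ ∀ v ∈ M, ∀ w ∈ M, u = v + w → v = 0 ∨ w = 0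

/-- The action of a permutation of `ℕ` on `ℤ^{(ℕ^d × [c])}`:
`(σ·u)((σ i₁, …, σ i_d), j) = u((i₁, …, i_d), j)`. -/
noncomputable def permActd (d c : ℕ) (σ : Equiv.Perm ℕ) (u : (Fin d → ℕ) × Fin c →₀ ℤ) :
    (Fin d → ℕ) × Fin c →₀ ℤ :=
  Finsupp.equivMapDomain
    (Equiv.prodCongr ((Equiv.refl (Fin d)).arrowCongr σ) (Equiv.refl (Fin c))) u

/-- The action of a permutation of `ℕ` on `ℤ^{(ℕ × [c])}`: `(σ·u)(σ i, j) = u(i, j)`. -/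
noncomputable def permAct1 (c : ℕ) (σ : Equiv.Perm ℕ) (u : ℕ × Fin c →₀ ℤ) :
    ℕ × Fin c →₀ ℤ :=
  Finsupp.equivMapDomain (Equiv.prodCongr σ (Equiv.refl (Fin c))) u

/-- The action of a permutation of `ℕ` on `ℤ^{(ℕ)}`: `(σ·u)(σ i) = u i`. -/
noncomputable def permAct0 (σ : Equiv.Perm ℕ) (u : ℕ →₀ ℤ) : ℕ →₀ ℤ :=
  Finsupp.equivMapDomain σ u

/-- `Sym(B)` for `B ⊆ ℤ^{(ℕ^d × [c])}`. -/
def symOrbitd (d c : ℕ) (B : Set ((Fin d → ℕ) × Fin c →₀ ℤ)) :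
    Set ((Fin d → ℕ) × Fin c →₀ ℤ) :=
  {w | ∃ σ, IsFinPerm σ ∧ ∃ b ∈ B, w = permActd d c σ b}

/-- `Sym(n)(B)` for `B ⊆ ℤ^{(ℕ^d × [c])}`. -/
def symOrbitNd (d c n : ℕ) (B : Set ((Fin d → ℕ) × Fin c →₀ ℤ)) :
    Set ((Fin d → ℕ) × Fin c →₀ ℤ) :=
  {w | ∃ σ, InSymN n σ ∧ ∃ b ∈ B, w = permActd d c σ b}

/-- `Sym(B)` for `B ⊆ ℤ^{(ℕ × [c])}`. -/
def symOrbit1 (c : ℕ) (B : Set (ℕ × Fin c →₀ ℤ)) : Set (ℕ × Fin c →₀ ℤ) :=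
  {w | ∃ σ, IsFinPerm σ ∧ ∃ b ∈ B, w = permAct1 c σ b}

/-- `Sym(B)` for `B ⊆ ℤ^{(ℕ)}`. -/
def symOrbit0 (B : Set (ℕ →₀ ℤ)) : Set (ℕ →₀ ℤ) :=
  {w | ∃ σ, IsFinPerm σ ∧ ∃ b ∈ B, w = permAct0 σ b}

/-- `supp(u) ⊆ I_n = [n]^d × [c]`. -/
def SuppIn (d c n : ℕ) (u : (Fin d → ℕ) × Fin c →₀ ℤ) : Prop :=
  ∀ p : (Fin d → ℕ) × Fin c, u p ≠ 0 → ∀ k, p.1 k < n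

/-- `ℤ^{(I_n)}`, for `I_n = [n]^d × [c]`, as a subgroup of `ℤ^{(ℕ^d × [c])}`. -/
noncomputable def suppSubgroup (d c n : ℕ) : AddSubgroup ((Fin d → ℕ) × Fin c →₀ ℤ) where
  carrier := {u | SuppIn d c n u}
  zero_mem' := by intro p hp; simp at hp
  add_mem' := by
    intro a b ha hb p hp k
    by_cases h : a p = 0
    · refine hb p ?_ k
      intro hbp
      exact hp (by simp [h, hbp])
    · exact ha p h k
  neg_mem' := by
    intro a ha p hp k
    refine ha p ?_ k
    intro hap
    exact hp (by simp [hap])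

/-- The positive part `u⁺`. -/
noncomputable def fsPos {I : Type*} (u : I →₀ ℤ) : I →₀ ℤ :=
  u.mapRange (fun z => max z 0) (by simp)

/-- The negative part `u⁻`. -/
noncomputable def fsNeg {I : Type*} (u : I →₀ ℤ) : I →₀ ℤ :=
  u.mapRange (fun z => max (-z) 0) (by simp)


section AuxLemmas

variable {I : Type*}

lemma int_abs_lt (a b : ℤ) (h1 : 0 ≤ a * b) (h2 : |a| ≤ |b|) (h3 : a ≠ b) : |a| < |b| := by
  rcases lt_or_eq_of_le h2 with h4|h4
  · exact h4
  · exfalso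
    rcases abs_eq_abs.mp h4 with h5|h5
    · exact h3 h5
    · subst h5
      have hb : b ≠ 0 := by omega
      have := mul_self_pos.mpr hb
      nlinarith

lemma int_sign_bounds (g a : ℤ) (h1 : 0 ≤ g * a) (h2 : |g| ≤ |a|) :
    g ≤ max a 0 ∧ -g ≤ max (-a) 0 := by
  rcases lt_trichotomy g 0 with h|h|h
  · have ha : a ≤ 0 := by nlinarith
    rw [abs_of_neg h, abs_of_nonpos ha] at h2
    constructor <;> simp [le_max_iff] <;> omega
  · simp [h]
  · have ha : 0 ≤ a := by nlinarith
    rw [abs_of_pos h, abs_of_nonneg ha] at h2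
    constructor <;> simp [le_max_iff] <;> omega

lemma sqle_trans {a b c : I →₀ ℤ} (h1 : Sqle a b) (h2 : Sqle b c) : Sqle a c := by
  intro i
  obtain ⟨p1, q1⟩ := h1 i
  obtain ⟨p2, q2⟩ := h2 i
  refine ⟨?_, le_trans q1 q2⟩
  rcases eq_or_ne (a i) 0 with h|h
  · simp [h]
  · have hb : b i ≠ 0 := by
      intro hb; rw [hb] at q1; simp only [abs_zero, abs_nonpos_iff] at q1; exact h q1
    nlinarith [mul_nonneg p1 p2, mul_self_pos.mpr hb]

lemma abs_le_natAbs_le {a b : ℤ} (h : |a| ≤ |b|) : a.natAbs ≤ b.natAbs := by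
  simp only [Int.abs_eq_natAbs] at h; exact_mod_cast h

lemma abs_lt_natAbs_lt {a b : ℤ} (h : |a| < |b|) : a.natAbs < b.natAbs := by
  simp only [Int.abs_eq_natAbs] at h; exact_mod_cast h

lemma graver_exists (L : AddSubgroup (I →₀ ℤ)) :
    ∀ z : I →₀ ℤ, z ∈ L → z ≠ 0 → ∃ g ∈ GraverBasis (L : Set (I →₀ ℤ)), Sqle g z := by
  suffices h : ∀ n : ℕ, ∀ z : I →₀ ℤ, z ∈ L → z ≠ 0 →
      (z.support.sum fun i => (z i).natAbs) ≤ n →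
      ∃ g ∈ GraverBasis (L : Set (I →₀ ℤ)), Sqle g z by
    intro z hz hz0; exact h _ z hz hz0 le_rfl
  intro n
  induction n with
  | zero =>
    intro z hz hz0 hn
    exfalso
    apply hz0
    have hs : z.support = ∅ := by
      by_contra hne
      obtain ⟨i, hi⟩ := Finset.nonempty_of_ne_empty hne
      have h1 : z i ≠ 0 := Finsupp.mem_support_iff.mp hi
      have h2 : 1 ≤ (z i).natAbs := by omega
      have h3 : (z i).natAbs ≤ z.support.sum fun i => (z i).natAbs :=
        Finset.single_le_sum (f := fun j => (z j).natAbs) (fun _ _ => Nat.zero_le _) hi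
      omega
    exact Finsupp.support_eq_empty.mp hs
  | succ n ih =>
    intro z hz hz0 hn
    by_cases hmin : ∀ v ∈ (L : Set (I →₀ ℤ)), v ≠ 0 → Sqle v z → v = z
    · exact ⟨z, ⟨hz, hz0, hmin⟩, fun i => ⟨mul_self_nonneg _, le_rfl⟩⟩
    · push_neg at hmin
      obtain ⟨w, hwL, hw0, hwz, hwne⟩ := hmin
      have hsub : w.support ⊆ z.support := by
        intro i hi
        simp only [Finsupp.mem_support_iff] at hi ⊢
        intro hzi
        have h2 := (hwz i).2
        rw [hzi] at h2
        simp only [abs_zero, abs_nonpos_iff] at h2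
        exact hi h2
      obtain ⟨i0, hi0⟩ : ∃ i, w i ≠ z i := by
        by_contra hc; push_neg at hc; exact hwne (Finsupp.ext hc)
      have hz0i : z i0 ≠ 0 := by
        intro h
        have h2 := (hwz i0).2
        rw [h] at h2
        simp only [abs_zero, abs_nonpos_iff] at h2
        exact hi0 (by rw [h2, h])
      have hlt : (w i0).natAbs < (z i0).natAbs :=
        abs_lt_natAbs_lt (int_abs_lt (w i0) (z i0) (hwz i0).1 (hwz i0).2 hi0)
      have hmeas : (w.support.sum fun i => (w i).natAbs) ≤ n := by
        have e1 : (w.support.sum fun i => (w i).natAbs)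
            = z.support.sum fun i => (w i).natAbs := by
          refine Finset.sum_subset hsub ?_
          intro i _ hi
          simp [Finsupp.notMem_support_iff.mp hi]
        have e2 : (z.support.sum fun i => (w i).natAbs)
            < z.support.sum fun i => (z i).natAbs := by
          refine Finset.sum_lt_sum (fun i _ => abs_le_natAbs_le (hwz i).2) ?_
          exact ⟨i0, Finsupp.mem_support_iff.mpr hz0i, hlt⟩
        omega
      obtain ⟨g, hg, hgw⟩ := ih w hwL hw0 hmeas
      exact ⟨g, hg, sqle_trans hgw hwz⟩

end AuxLemmas


section PathLemmas

variable {I : Type*}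

lemma fsnonneg_add {a b : I →₀ ℤ} (ha : FsNonneg a) (hb : FsNonneg b) : FsNonneg (a + b) :=
  fun i => by rw [Finsupp.add_apply]; exact add_nonneg (ha i) (hb i)

lemma fiber_nonneg {L : Set (I →₀ ℤ)} {u x : I →₀ ℤ} (hx : x ∈ latFiber L u) : FsNonneg x :=
  hx.1

/-- The key step: from a non-minimal fiber element, one Graver move decreases the order. -/
lemma groebner_step (L : AddSubgroup (I →₀ ℤ)) (ord : TermOrderZ I)
    {u m v : I →₀ ℤ}
    (hm : m ∈ latFiber (L : Set (I →₀ ℤ)) u)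
    (hmmin : ∀ w ∈ latFiber (L : Set (I →₀ ℤ)) u, w ≠ m → ord.lt m w)
    (hv : v ∈ latFiber (L : Set (I →₀ ℤ)) u) (hne : v ≠ m) :
    ∃ g ∈ GraverBasis (L : Set (I →₀ ℤ)),
      (v - g) ∈ latFiber (L : Set (I →₀ ℤ)) u ∧ ord.lt (v - g) v := by
  have hzL : v - m ∈ L := by
    have h1 : v - m = (u - m) - (u - v) := by abel
    rw [h1]; exact sub_mem hm.2 hv.2
  have hz0 : v - m ≠ 0 := sub_ne_zero.mpr hne
  obtain ⟨g, hgG, hgz⟩ := graver_exists L (v - m) hzL hz0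
  have hbounds : ∀ i, g i ≤ max (v i - m i) 0 ∧ -(g i) ≤ max (-(v i - m i)) 0 := by
    intro i
    have h := hgz i
    rw [Finsupp.sub_apply] at h
    exact int_sign_bounds _ _ h.1 h.2
  have hvg_nn : FsNonneg (v - g) := by
    intro i
    rw [Finsupp.sub_apply]
    have h1 := (hbounds i).1
    have h2 : max (v i - m i) 0 ≤ v i := max_le (by have := hm.1 i; omega) (hv.1 i)
    omega
  have hmg_nn : FsNonneg (m + g) := by
    intro i
    rw [Finsupp.add_apply]
    have h1 := (hbounds i).2
    have h2 : max (-(v i - m i)) 0 ≤ m i := max_le (by have := hv.1 i; omega) (hm.1 i)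
    omega
  have hvgF : (v - g) ∈ latFiber (L : Set (I →₀ ℤ)) u := by
    refine ⟨hvg_nn, ?_⟩
    have h1 : u - (v - g) = (u - v) + g := by abel
    rw [h1]; exact add_mem hv.2 hgG.1
  have hmgF : (m + g) ∈ latFiber (L : Set (I →₀ ℤ)) u := by
    refine ⟨hmg_nn, ?_⟩
    have h1 : u - (m + g) = (u - m) - g := by abel
    rw [h1]; exact sub_mem hm.2 hgG.1
  have hg0 : g ≠ 0 := hgG.2.1
  have hmgne : m + g ≠ m := by
    intro h; exact hg0 (by simpa using h)
  have hltm : ord.lt m (m + g) := hmmin _ hmgF hmgne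
  refine ⟨g, hgG, hvgF, ?_⟩
  by_contra hc
  have hvgne : v - g ≠ v := by
    intro h; exact hg0 (by simpa [sub_eq_iff_eq_add] using h)
  have hltv : ord.lt v (v - g) :=
    (ord.total v (v - g) hv.1 hvg_nn (Ne.symm hvgne)).resolve_right hc
  have h1 : ord.lt (m + (v - g)) ((m + g) + (v - g)) :=
    ord.add_right m (m + g) (v - g) hm.1 hmg_nn hvg_nn hltm
  have h2 : ord.lt (v + m) ((v - g) + m) :=
    ord.add_right v (v - g) m hv.1 hvg_nn hm.1 hltv
  have e1 : m + (v - g) = (v - g) + m := by abel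
  have e2 : (m + g) + (v - g) = v + m := by abel
  rw [e1, e2] at h1
  have hnn1 : FsNonneg ((v - g) + m) := fsnonneg_add hvg_nn hm.1
  have hnn2 : FsNonneg (v + m) := fsnonneg_add hv.1 hm.1
  exact ord.irrefl _ hnn1 (ord.trans _ _ _ hnn1 hnn2 hnn1 h1 h2)

/-- A decreasing `B`-path inside the fiber of `u` from `x` to `m`. -/
def PathTo (L : Set (I →₀ ℤ)) (lt : (I →₀ ℤ) → (I →₀ ℤ) → Prop) (B : Set (I →₀ ℤ))
    (u m x : I →₀ ℤ) : Prop :=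
  ∃ (s : ℕ) (vv : ℕ → (I →₀ ℤ)), vv 0 = x ∧ (∀ t ≤ s, vv t ∈ latFiber L u) ∧
    (∀ t < s, lt (vv (t + 1)) (vv t) ∧ (vv t - vv (t + 1) ∈ B ∨ vv (t + 1) - vv t ∈ B)) ∧
    vv s = m

lemma pathTo_self {L : Set (I →₀ ℤ)} {lt : (I →₀ ℤ) → (I →₀ ℤ) → Prop} {B : Set (I →₀ ℤ)}
    {u m : I →₀ ℤ} (hm : m ∈ latFiber L u) : PathTo L lt B u m m :=
  ⟨0, fun _ => m, rfl, fun _ _ => hm, fun t ht => absurd ht (Nat.not_lt_zero t), rfl⟩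

lemma pathTo_prepend {L : Set (I →₀ ℤ)} {lt : (I →₀ ℤ) → (I →₀ ℤ) → Prop} {B : Set (I →₀ ℤ)}
    {u m x x' : I →₀ ℤ} (hp : PathTo L lt B u m x') (hx : x ∈ latFiber L u)
    (hlt : lt x' x) (hmv : x - x' ∈ B ∨ x' - x ∈ B) : PathTo L lt B u m x := by
  obtain ⟨s, vv, h0, hF, hstep, hend⟩ := hp
  refine ⟨s + 1, fun t => if t = 0 then x else vv (t - 1), by simp, ?_, ?_, ?_⟩
  · intro t ht
    by_cases h : t = 0
    · simpa [h] using hx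
    · simp only [if_neg h]
      exact hF (t - 1) (by omega)
  · intro t ht
    by_cases h : t = 0
    · subst h
      simp only [if_neg (by omega : (1:ℕ) ≠ 0), if_pos rfl]
      norm_num [h0]
      exact ⟨hlt, hmv⟩
    · simp only [if_neg h, if_neg (by omega : t + 1 ≠ 0)]
      have h1 : t + 1 - 1 = (t - 1) + 1 := by omega
      rw [h1]
      exact hstep (t - 1) (by omega)
  · simp only [if_neg (by omega : s + 1 ≠ 0), Nat.add_sub_cancel]
    exact hend

lemma pathTo_all (L : AddSubgroup (I →₀ ℤ)) (ord : TermOrderZ I)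
    {u m : I →₀ ℤ}
    (hm : m ∈ latFiber (L : Set (I →₀ ℤ)) u)
    (hmmin : ∀ w ∈ latFiber (L : Set (I →₀ ℤ)) u, w ≠ m → ord.lt m w) :
    ∀ v ∈ latFiber (L : Set (I →₀ ℤ)) u,
      PathTo (L : Set (I →₀ ℤ)) ord.lt (GraverBasis (L : Set (I →₀ ℤ))) u m v := by
  intro v hv
  by_contra hnv
  set S : Set (I →₀ ℤ) := {x | x ∈ latFiber (L : Set (I →₀ ℤ)) u ∧
    ¬ PathTo (L : Set (I →₀ ℤ)) ord.lt (GraverBasis (L : Set (I →₀ ℤ))) u m x} with hS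
  have hSne : S.Nonempty := ⟨v, hv, hnv⟩
  obtain ⟨m', hm'S, hm'min⟩ := ord.min_exists S (fun x hx => hx.1.1) hSne
  have hm'ne : m' ≠ m := by
    intro h
    apply hm'S.2
    rw [h]
    exact pathTo_self hm
  obtain ⟨g, hgG, hvgF, hvglt⟩ := groebner_step L ord hm hmmin hm'S.1 hm'ne
  have hvgne : m' - g ≠ m' := by
    intro h
    exact hgG.2.1 (by simpa [sub_eq_iff_eq_add] using h)
  have hP : PathTo (L : Set (I →₀ ℤ)) ord.lt (GraverBasis (L : Set (I →₀ ℤ))) u m (m' - g) := by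
    by_contra hnp
    exact hm'min _ ⟨hvgF, hnp⟩ hvgne hvglt
  have hmv : m' - (m' - g) ∈ GraverBasis (L : Set (I →₀ ℤ)) := by
    rw [sub_sub_cancel]; exact hgG
  exact hm'S.2 (pathTo_prepend hP hm'S.1 hvglt (Or.inl hmv))

end PathLemmas

/-- For any lattice `L ⊆ ℤ^{(I)}`: (a) the Graver basis of `L` is a
Gröbner basis with respect to every term order (hence a universal Gröbner basis);
(b) a Gröbner basis of `L` with respect to some term order is a Markov basis;
(c) a Markov basis of `L` is a generating set of `L`. -/
theorem basis_implications {I : Type*} (L : AddSubgroup (I →₀ ℤ)) :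
    (∀ ord : TermOrderZ I,
        IsGroebnerBasis (L : Set (I →₀ ℤ)) ord.lt (GraverBasis (L : Set (I →₀ ℤ)))) ∧
    (∀ B : Set (I →₀ ℤ), B ⊆ (L : Set (I →₀ ℤ)) →
        (∃ ord : TermOrderZ I, IsGroebnerBasis (L : Set (I →₀ ℤ)) ord.lt B) →
        IsMarkovBasis (L : Set (I →₀ ℤ)) B) ∧
    (∀ B : Set (I →₀ ℤ), B ⊆ (L : Set (I →₀ ℤ)) →
        IsMarkovBasis (L : Set (I →₀ ℤ)) B → AddSubgroup.closure B = L) := by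
  have hfib : ∀ u, ∀ x ∈ latFiber (L : Set (I →₀ ℤ)) u,
      latFiber (L : Set (I →₀ ℤ)) x = latFiber (L : Set (I →₀ ℤ)) u := by
    intro u x hx
    ext y
    constructor
    · rintro ⟨hy, hxy⟩
      refine ⟨hy, ?_⟩
      have h : u - y = (u - x) + (x - y) := by abel
      rw [h]; exact add_mem hx.2 hxy
    · rintro ⟨hy, huy⟩
      refine ⟨hy, ?_⟩
      have h : x - y = (u - y) - (u - x) := by abel
      rw [h]; exact sub_mem huy hx.2
  refine ⟨?_, ?_, ?_⟩
  · -- (a)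
    intro ord u hu
    have huF : u ∈ latFiber (L : Set (I →₀ ℤ)) u := ⟨hu, by rw [sub_self]; exact zero_mem L⟩
    obtain ⟨m, hmF, hmmin0⟩ :=
      ord.min_exists (latFiber (L : Set (I →₀ ℤ)) u) (fun x hx => hx.1) ⟨u, huF⟩
    have hmmin : ∀ w ∈ latFiber (L : Set (I →₀ ℤ)) u, w ≠ m → ord.lt m w := fun w hw hne =>
      (ord.total m w hmF.1 hw.1 (Ne.symm hne)).resolve_right (hmmin0 w hw hne)
    obtain ⟨s, vv, h0, hF, hstep, hend⟩ := pathTo_all L ord hmF hmmin u huF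
    refine ⟨s, vv, h0, hF, hstep, ?_⟩
    intro w hw hne
    rw [hend] at hne ⊢
    exact hmmin w hw hne
  · -- (b)
    intro B hBL hex
    obtain ⟨ord, hgb⟩ := hex
    intro u hu v hvF w hwF
    have reach : ∀ x ∈ latFiber (L : Set (I →₀ ℤ)) u, ∃ mx,
        Relation.ReflTransGen
          (fun a b => a ∈ latFiber (L : Set (I →₀ ℤ)) u ∧ b ∈ latFiber (L : Set (I →₀ ℤ)) u ∧
            (a - b ∈ B ∨ b - a ∈ B)) x mx ∧
        mx ∈ latFiber (L : Set (I →₀ ℤ)) u ∧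
        ∀ y ∈ latFiber (L : Set (I →₀ ℤ)) u, y ≠ mx → ord.lt mx y := by
      intro x hx
      obtain ⟨s, vv, h0, hF, hstep, hminp⟩ := hgb x hx.1
      rw [hfib u x hx] at hF hminp
      have key : ∀ t, t ≤ s → Relation.ReflTransGen
          (fun a b => a ∈ latFiber (L : Set (I →₀ ℤ)) u ∧ b ∈ latFiber (L : Set (I →₀ ℤ)) u ∧
            (a - b ∈ B ∨ b - a ∈ B)) x (vv t) := by
        intro t
        induction t with
        | zero => intro _; rw [h0]
        | succ t iht =>
          intro h
          exact (iht (by omega)).tail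
            ⟨hF t (by omega), hF (t + 1) (by omega), (hstep t (by omega)).2⟩
      exact ⟨vv s, key s le_rfl, hF s le_rfl, hminp⟩
    obtain ⟨mv, hv1, hv2, hv3⟩ := reach v hvF
    obtain ⟨mw, hw1, hw2, hw3⟩ := reach w hwF
    have hsym : Symmetric
        (fun a b => a ∈ latFiber (L : Set (I →₀ ℤ)) u ∧ b ∈ latFiber (L : Set (I →₀ ℤ)) u ∧
          (a - b ∈ B ∨ b - a ∈ B)) := fun a b h => ⟨h.2.1, h.1, h.2.2.symm⟩
    have heq : mv = mw := by
      by_contra hne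
      have l1 := hv3 mw hw2 (Ne.symm hne)
      have l2 := hw3 mv hv2 hne
      exact ord.irrefl mv hv2.1 (ord.trans _ _ _ hv2.1 hw2.1 hv2.1 l1 l2)
    refine hv1.trans ?_
    rw [heq]
    haveI : Std.Symm (fun a b => a ∈ latFiber (L : Set (I →₀ ℤ)) u ∧
      b ∈ latFiber (L : Set (I →₀ ℤ)) u ∧ (a - b ∈ B ∨ b - a ∈ B)) := ⟨fun a b h => hsym h⟩
    exact Relation.ReflTransGen.symmetric.symm _ _ hw1
  · -- (c)
    intro B hBL hMarkov
    apply le_antisymm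
    · exact (AddSubgroup.closure_le L).mpr hBL
    · intro z hz
      have hpos : FsNonneg (fsPos z) := by
        intro i
        simp only [fsPos, Finsupp.mapRange_apply]
        exact le_max_right _ _
      have hneg : FsNonneg (fsNeg z) := by
        intro i
        simp only [fsNeg, Finsupp.mapRange_apply]
        exact le_max_right _ _
      have hdiff : fsPos z - fsNeg z = z := by
        ext i
        simp only [fsPos, fsNeg, Finsupp.sub_apply, Finsupp.mapRange_apply]
        omega
      have h1 : fsPos z ∈ latFiber (L : Set (I →₀ ℤ)) (fsPos z) :=
        ⟨hpos, by rw [sub_self]; exact zero_mem L⟩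
      have h2 : fsNeg z ∈ latFiber (L : Set (I →₀ ℤ)) (fsPos z) :=
        ⟨hneg, by rw [hdiff]; exact hz⟩
      have h3 := hMarkov (fsPos z) hpos _ h1 _ h2
      have key : ∀ x y : I →₀ ℤ,
          Relation.ReflTransGen
            (fun a b => a ∈ latFiber (L : Set (I →₀ ℤ)) (fsPos z) ∧
              b ∈ latFiber (L : Set (I →₀ ℤ)) (fsPos z) ∧ (a - b ∈ B ∨ b - a ∈ B)) x y →
          x - y ∈ AddSubgroup.closure B := by
        intro x y h
        induction h with
        | refl => rw [sub_self]; exact zero_mem _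
        | @tail b c hxb hbc ih =>
          have he : x - c = (x - b) + (b - c) := by abel
          rw [he]
          refine add_mem ih ?_
          rcases hbc.2.2 with h|h
          · exact AddSubgroup.subset_closure h
          · have : b - c = -(c - b) := by abel
            rw [this]
            exact neg_mem (AddSubgroup.subset_closure h)
      have h4 := key _ _ h3
      rw [hdiff] at h4
      exact h4
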